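/- Let U be a universal operator on a separable infinite-dimensional complex Hilbert space H and let K ∈ L(H) be an injective compact operator. On H ⊕ H define V(x,y) = (Ux + y, 0) and W(x,y) = (Ux + y, Kx). Then V is universal on H ⊕ H, the difference W − V is a compact operator, and W is injective, hence W is not universal. Consequently, the class of universal operators is not invariant under compact perturbations. -/

import Mathlib

noncomputable section

/-- Universal operator on a complex Hilbert space. -/
def IsUniversal {H : Type*} [NormedAddCommGroup H] [InnerProductSpace ℂ H]
    (U : H →L[ℂ] H) : Prop :=
  ∀ T : H →L[ℂ] H, ∃ M : Submodule ℂ H, IsClosed (M : Set H) ∧ (∀ x ∈ M, U x ∈ M) ∧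
    ∃ c : ℂ, c ≠ 0 ∧ ∃ J : H ≃L[ℂ] M, ∀ x : H, U (J x : H) = c • ((J (T x) : H))

/-- The element `(x, y)` of the Hilbert-space direct sum `H ⊕ H`. -/
def mkPair {H : Type*} [NormedAddCommGroup H] [InnerProductSpace ℂ H] (x y : H) :
    WithLp 2 (H × H) :=
  (WithLp.equiv 2 (H × H)).symm (x, y)

open TopologicalSpace

lemma countable_of_orthonormal' {E : Type*} [NormedAddCommGroup E] [InnerProductSpace ℂ E]
    [SeparableSpace E] {ι : Type*} {v : ι → E} (hv : Orthonormal ℂ v) : Countable ι := by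
  have hdist : ∀ i j : ι, i ≠ j → 1 ≤ dist (v i) (v j) := by
    intro i j hij
    have h2 : ‖v i - v j‖ ^ 2 = 2 := by
      rw [@norm_sub_sq ℂ, hv.2 hij, hv.1 i, hv.1 j]
      norm_num
    rw [dist_eq_norm]
    nlinarith [norm_nonneg (v i - v j)]
  refine Pairwise.countable_of_isOpen_disjoint
      (s := fun i => Metric.ball (v i) (1/2)) ?_ (fun i => Metric.isOpen_ball)
      (fun i => Metric.nonempty_ball.2 (by norm_num))
  intro i j hij
  refine Metric.ball_disjoint_ball ?_
  have := hdist i j hij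
  linarith

lemma exists_isometry_l2' {E : Type*} [NormedAddCommGroup E] [InnerProductSpace ℂ E]
    [CompleteSpace E] [SeparableSpace E] (hinf : ¬ FiniteDimensional ℂ E) :
    Nonempty (E ≃ₗᵢ[ℂ] lp (fun _ : ℕ => ℂ) 2) := by
  obtain ⟨w, b, hb⟩ := exists_hilbertBasis ℂ E
  haveI : Countable ↥w := countable_of_orthonormal' b.orthonormal
  haveI : Infinite ↥w := by
    rw [← not_finite_iff_infinite]
    intro hfin
    haveI : Fintype ↥w := Fintype.ofFinite _
    exact hinf (Module.Finite.of_basis b.toOrthonormalBasis.toBasis)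
  obtain ⟨e⟩ : Nonempty (↥w ≃ ℕ) := nonempty_equiv_of_countable
  have hv : Orthonormal ℂ (⇑b ∘ ⇑e.symm) := b.orthonormal.comp _ e.symm.injective
  have hsp : ⊤ ≤ (Submodule.span ℂ (Set.range (⇑b ∘ ⇑e.symm))).topologicalClosure := by
    rw [Set.range_comp, e.symm.surjective.range_eq, Set.image_univ]
    exact b.dense_span.ge
  exact ⟨(HilbertBasis.mk hv hsp).repr⟩

/-- Let `U` be universal on `H`, let `K₀` be an injective compact operator, and on `H ⊕ H`
let `V (x,y) = (U x + y, 0)` and `W (x,y) = (U x + y, K₀ x)`. Then `V` is universal, `W - V`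
is compact, and `W` is injective, hence not universal. Consequently the class of universal
operators is not invariant under compact perturbations. -/
theorem universal_not_invariant_under_compact_perturbation {H : Type*}
    [NormedAddCommGroup H] [InnerProductSpace ℂ H] [CompleteSpace H]
    [TopologicalSpace.SeparableSpace H]
    (hinf : ¬ FiniteDimensional ℂ H)
    (U : H →L[ℂ] H) (hU : IsUniversal U)
    (K₀ : H →L[ℂ] H) (hK₀c : IsCompactOperator K₀) (hK₀i : Function.Injective K₀)
    (V W : WithLp 2 (H × H) →L[ℂ] WithLp 2 (H × H))
    (hV : ∀ x y : H, V (mkPair x y) = mkPair (U x + y) 0)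
    (hW : ∀ x y : H, W (mkPair x y) = mkPair (U x + y) (K₀ x)) :
    IsUniversal V ∧
    IsCompactOperator (W - V) ∧
    Function.Injective W ∧
    ¬ IsUniversal W := by
  set K := WithLp 2 (H × H) with hK
  let P : K ≃L[ℂ] H × H := WithLp.prodContinuousLinearEquiv 2 ℂ H H
  have hmk : ∀ z : K, mkPair (P z).1 (P z).2 = z := fun z => rfl
  have hPmk : ∀ x y : H, P (mkPair x y) = (x, y) := fun x y => rfl
  -- the embedding `x ↦ (x, 0)`
  let toK : H →L[ℂ] K :=
    (P.symm : (H × H) →L[ℂ] K).comp (ContinuousLinearMap.inl ℂ H H)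
  have htoK : ∀ x : H, toK x = mkPair x 0 := fun x => rfl
  have htoK_inj : Function.Injective toK := by
    intro a b hab
    have : P (toK a) = P (toK b) := by rw [hab]
    simpa [hPmk, htoK, Prod.ext_iff] using this
  -- the embedding `y ↦ (0, y)`
  let toK2 : H →L[ℂ] K :=
    (P.symm : (H × H) →L[ℂ] K).comp (ContinuousLinearMap.inr ℂ H H)
  -- the first projection
  let fst : K →L[ℂ] H := (ContinuousLinearMap.fst ℂ H H).comp (P : K →L[ℂ] (H × H))
  -- instances for `K`
  haveI hsepK : SeparableSpace K :=
    P.symm.surjective.denseRange.separableSpace P.symm.continuous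
  have hinfK : ¬ FiniteDimensional ℂ K := by
    intro hfin
    exact hinf (FiniteDimensional.of_injective (toK : H →ₗ[ℂ] K) htoK_inj)
  -- a continuous linear isomorphism `K ≃L H`
  obtain ⟨iH⟩ := exists_isometry_l2' (E := H) hinf
  obtain ⟨iK⟩ := exists_isometry_l2' (E := K) hinfK
  let Φ : K ≃L[ℂ] H := (iK.trans iH.symm).toContinuousLinearEquiv
  -- injectivity of W
  have hWinj : Function.Injective W := by
    have hker : ∀ z : K, W z = 0 → z = 0 := by
      intro z hz
      rw [← hmk z, hW] at hz
      have h1 : U (P z).1 + (P z).2 = 0 ∧ K₀ (P z).1 = 0 := by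
        have := congrArg (fun w => P w) hz
        simpa [hPmk, Prod.ext_iff] using this
      have hz1 : (P z).1 = 0 := hK₀i (by rw [h1.2, map_zero])
      have hz2 : (P z).2 = 0 := by
        have := h1.1
        rwa [hz1, map_zero, zero_add] at this
      rw [← hmk z, hz1, hz2]
      rfl
    intro a b hab
    have h0 : W (a - b) = 0 := by rw [map_sub, hab, sub_self]
    exact sub_eq_zero.mp (hker _ h0)
  -- universality of V
  have hVuniv : IsUniversal V := by
    intro T
    -- conjugate T to an operator on H
    let T' : H →L[ℂ] H := (Φ : K →L[ℂ] H).comp (T.comp (Φ.symm : H →L[ℂ] K))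
    obtain ⟨M, hMclosed, hMinv, c, hc, J, hJ⟩ := hU T'
    refine ⟨M.map (toK : H →ₗ[ℂ] K), ?_, ?_, c, hc, ?_⟩
    · -- closedness
      have hset : (M.map (toK : H →ₗ[ℂ] K) : Set K)
          = ⇑P ⁻¹' ((M : Set H) ×ˢ ({0} : Set H)) := by
        ext z
        simp only [SetLike.mem_coe, Submodule.mem_map, Set.mem_preimage, Set.mem_prod,
          Set.mem_singleton_iff]
        constructor
        · rintro ⟨m, hm, rfl⟩
          constructor
          · simpa [htoK, hPmk] using hm
          · simp [htoK, hPmk]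
        · rintro ⟨h1, h2⟩
          refine ⟨(P z).1, h1, ?_⟩
          have h3 : toK (P z).1 = mkPair (P z).1 (P z).2 := by rw [htoK, h2]
          show toK (P z).1 = z
          rw [h3, hmk]
      rw [hset]
      exact (hMclosed.prod isClosed_singleton).preimage P.continuous
    · -- invariance
      rintro z hz
      obtain ⟨m, hm, rfl⟩ := hz
      refine ⟨U m, hMinv m hm, ?_⟩
      show toK (U m) = V (toK m)
      have h' : V (toK m) = mkPair (U m + 0) 0 := by rw [htoK]; exact hV m 0
      rw [h', add_zero]
      exact htoK (U m)
    · -- the isomorphism J̃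
      haveI : CompleteSpace M := hMclosed.completeSpace_coe
      have hclosed' : IsClosed ((M.map (toK : H →ₗ[ℂ] K)) : Set K) := by
        have hset : (M.map (toK : H →ₗ[ℂ] K) : Set K)
            = ⇑P ⁻¹' ((M : Set H) ×ˢ ({0} : Set H)) := by
          ext z
          simp only [SetLike.mem_coe, Submodule.mem_map, Set.mem_preimage, Set.mem_prod,
            Set.mem_singleton_iff]
          constructor
          · rintro ⟨m, hm, rfl⟩
            exact ⟨by simpa [htoK, hPmk] using hm, by simp [htoK, hPmk]⟩
          · rintro ⟨h1, h2⟩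
            refine ⟨(P z).1, h1, ?_⟩
            have h3 : toK (P z).1 = mkPair (P z).1 (P z).2 := by rw [htoK, h2]
            show toK (P z).1 = z
            rw [h3, hmk]
        rw [hset]
        exact (hMclosed.prod isClosed_singleton).preimage P.continuous
      haveI : CompleteSpace (M.map (toK : H →ₗ[ℂ] K)) := hclosed'.completeSpace_coe
      let f : M →L[ℂ] (M.map (toK : H →ₗ[ℂ] K)) :=
        (toK.comp M.subtypeL).codRestrict _ (fun m => Submodule.mem_map_of_mem m.2)
      have hf_inj : LinearMap.ker (f : M →ₗ[ℂ] (M.map (toK : H →ₗ[ℂ] K))) = ⊥ := by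
        rw [LinearMap.ker_eq_bot]
        intro a b hab
        have : toK (a : H) = toK (b : H) := congrArg Subtype.val hab
        exact Subtype.ext (htoK_inj this)
      have hf_surj : LinearMap.range (f : M →ₗ[ℂ] (M.map (toK : H →ₗ[ℂ] K))) = ⊤ := by
        rw [LinearMap.range_eq_top]
        rintro ⟨z, m, hm, rfl⟩
        exact ⟨⟨m, hm⟩, rfl⟩
      let eM := ContinuousLinearEquiv.ofBijective f hf_inj hf_surj
      refine ⟨(Φ.trans J).trans eM, ?_⟩
      intro z
      have hcoe : ∀ u : M, ((eM u : (M.map (toK : H →ₗ[ℂ] K))) : K) = toK (u : H) := fun u => rfl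
      have hJz : ((((Φ.trans J).trans eM) z : (M.map (toK : H →ₗ[ℂ] K))) : K)
          = toK ((J (Φ z) : H)) := rfl
      have hJTz : ((((Φ.trans J).trans eM) (T z) : (M.map (toK : H →ₗ[ℂ] K))) : K)
          = toK ((J (Φ (T z)) : H)) := rfl
      rw [hJz, hJTz, htoK, hV]
      have hT' : T' (Φ z) = Φ (T z) := by simp [T']
      have := hJ (Φ z)
      rw [hT'] at this
      rw [add_zero, this, ← htoK, ← map_smul, htoK]
  refine ⟨hVuniv, ?_, hWinj, ?_⟩
  · -- compactness of W - V
    have heq : ⇑(W - V) = ⇑toK2 ∘ ⇑K₀ ∘ ⇑fst := by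
      funext z
      have h1 : (W - V) z = W z - V z := rfl
      rw [h1, ← hmk z, hW, hV]
      have : mkPair (U (P z).1 + (P z).2) (K₀ (P z).1) - mkPair (U (P z).1 + (P z).2) 0
          = mkPair 0 (K₀ (P z).1) := by
        apply (P.injective)
        simp [hPmk, map_sub, Prod.ext_iff]
      rw [this]
      rfl
    have : IsCompactOperator (⇑K₀ ∘ ⇑fst) := hK₀c.comp_clm fst
    have h2 : IsCompactOperator (⇑toK2 ∘ (⇑K₀ ∘ ⇑fst)) := this.clm_comp toK2
    rw [heq]
    exact h2
  · -- W is not universal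
    intro hWu
    obtain ⟨M, _, _, c, hc, J, hJ⟩ := hWu 0
    haveI : Nontrivial H := by
      by_contra hnt
      rw [not_nontrivial_iff_subsingleton] at hnt
      exact hinf inferInstance
    obtain ⟨x, hx⟩ := exists_ne (0 : H)
    set z : K := mkPair x 0 with hz
    have hzne : z ≠ 0 := by
      intro h0
      apply hx
      have := congrArg (fun w => (P w).1) h0
      simpa [hz, hPmk] using this
    have h0 : W (J z : K) = 0 := by
      have := hJ z
      simpa using this
    have : (J z : K) = 0 := hWinj (by rw [h0, map_zero])
    have hJz0 : J z = 0 := by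
      exact Subtype.ext (by simpa using this)
    exact hzne (by simpa using J.injective (by rw [hJz0, map_zero]))

end
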